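/- If H commutes with the total number operator N = n₁+n₂+n₃+n₄, then conjugation by e^{-iθ(ñ₁+ñ₂)} equals conjugation by U_x(θ/2): e^{iθ(ñ₁+ñ₂)} H e^{-iθ(ñ₁+ñ₂)} = U_x(θ/2) H U_x(−θ/2), where U_x(φ) = exp(iφ(a₁†a₃+a₃†a₁)) exp(iφ(a₂†a₄+a₄†a₂)) and ñ₁+ñ₂ = (N + a₁†a₃+a₃†a₁ + a₂†a₄+a₄†a₂)/2. -/

import Mathlib

open NormedSpace

section Aux
variable {A : Type*} [NormedRing A] [StarRing A] [NormedAlgebra ℂ A] [CompleteSpace A]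
variable (a : Fin 4 → A)
variable (hcar1 : ∀ i j, a i * star (a j) + star (a j) * a i = if i = j then 1 else 0)
variable (hcar2 : ∀ i j, a i * a j + a j * a i = 0)

include hcar1 hcar2

lemma aux_comm_disjoint (i j k l : Fin 4)
    (hik : i ≠ k) (hil : i ≠ l) (hjk : j ≠ k) (hjl : j ≠ l) :
    Commute (star (a i) * a j) (star (a k) * a l) := by
  have e1 : ∀ i j : Fin 4, i ≠ j → a i * star (a j) = -(star (a j) * a i) := fun i j h =>
    eq_neg_of_add_eq_zero_left (by simpa [h] using hcar1 i j)
  have e1' : ∀ i j : Fin 4, i ≠ j → star (a j) * a i = -(a i * star (a j)) := fun i j h =>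
    eq_neg_of_add_eq_zero_right (by simpa [h] using hcar1 i j)
  have e2 : ∀ i j : Fin 4, a i * a j = -(a j * a i) := fun i j =>
    eq_neg_of_add_eq_zero_left (hcar2 i j)
  have e3 : ∀ i j : Fin 4, star (a i) * star (a j) = -(star (a j) * star (a i)) := by
    intro i j
    have h := congrArg star (hcar2 j i)
    simp only [star_add, star_mul, star_zero] at h
    exact eq_neg_of_add_eq_zero_left h
  show star (a i) * a j * (star (a k) * a l) = star (a k) * a l * (star (a i) * a j)
  calc star (a i) * a j * (star (a k) * a l)
      = star (a i) * (a j * star (a k)) * a l := by noncomm_ring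
    _ = star (a i) * (-(star (a k) * a j)) * a l := by rw [e1 j k hjk]
    _ = -(star (a i) * star (a k) * (a j * a l)) := by noncomm_ring
    _ = -(-(star (a k) * star (a i)) * -(a l * a j)) := by rw [e3 i k, e2 j l]
    _ = -(star (a k) * (star (a i) * a l) * a j) := by noncomm_ring
    _ = -(star (a k) * (-(a l * star (a i))) * a j) := by rw [e1' l i (Ne.symm hil)]
    _ = star (a k) * a l * (star (a i) * a j) := by noncomm_ring

lemma aux_ncomm (i j : Fin 4) (hij : i ≠ j) :
    Commute (star (a i) * a i + star (a j) * a j) (star (a i) * a j) := by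
  have hii : a i * star (a i) = 1 - star (a i) * a i :=
    eq_sub_of_add_eq (by simpa using hcar1 i i)
  have hjj : a j * star (a j) = 1 - star (a j) * a j :=
    eq_sub_of_add_eq (by simpa using hcar1 j j)
  have half : ∀ x : A, x + x = 0 → x = 0 := by
    intro x hx
    have h2 : (2 : ℂ) • x = 0 := by rw [two_smul]; exact hx
    simpa using (smul_eq_zero.mp h2).resolve_left (by norm_num)
  have hsqj : a j * a j = 0 := half _ (hcar2 j j)
  have hsqi' : star (a i) * star (a i) = 0 := by
    have h := congrArg star (half _ (hcar2 i i))
    simpa [star_mul] using h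
  have e1 : a j * star (a i) = -(star (a i) * a j) :=
    eq_neg_of_add_eq_zero_left (by simpa [hij.symm] using hcar1 j i)
  show (star (a i) * a i + star (a j) * a j) * (star (a i) * a j)
      = star (a i) * a j * (star (a i) * a i + star (a j) * a j)
  have L1 : star (a i) * a i * (star (a i) * a j) = star (a i) * a j := by
    calc star (a i) * a i * (star (a i) * a j)
        = star (a i) * (a i * star (a i)) * a j := by noncomm_ring
      _ = star (a i) * (1 - star (a i) * a i) * a j := by rw [hii]
      _ = star (a i) * a j - star (a i) * star (a i) * (a i * a j) := by noncomm_ring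
      _ = star (a i) * a j := by rw [hsqi']; noncomm_ring
  have L2 : star (a j) * a j * (star (a i) * a j) = 0 := by
    calc star (a j) * a j * (star (a i) * a j)
        = star (a j) * (a j * star (a i)) * a j := by noncomm_ring
      _ = star (a j) * (-(star (a i) * a j)) * a j := by rw [e1]
      _ = -(star (a j) * star (a i) * (a j * a j)) := by noncomm_ring
      _ = 0 := by rw [hsqj]; noncomm_ring
  have R1 : star (a i) * a j * (star (a i) * a i) = 0 := by
    calc star (a i) * a j * (star (a i) * a i)
        = star (a i) * (a j * star (a i)) * a i := by noncomm_ring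
      _ = star (a i) * (-(star (a i) * a j)) * a i := by rw [e1]
      _ = -(star (a i) * star (a i) * (a j * a i)) := by noncomm_ring
      _ = 0 := by rw [hsqi']; noncomm_ring
  have R2 : star (a i) * a j * (star (a j) * a j) = star (a i) * a j := by
    calc star (a i) * a j * (star (a j) * a j)
        = star (a i) * (a j * star (a j)) * a j := by noncomm_ring
      _ = star (a i) * (1 - star (a j) * a j) * a j := by rw [hjj]
      _ = star (a i) * a j - star (a i) * star (a j) * (a j * a j) := by noncomm_ring
      _ = star (a i) * a j := by rw [hsqj]; noncomm_ring
  calc (star (a i) * a i + star (a j) * a j) * (star (a i) * a j)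
      = star (a i) * a i * (star (a i) * a j) + star (a j) * a j * (star (a i) * a j) := by
        noncomm_ring
    _ = star (a i) * a j := by rw [L1, L2, add_zero]
    _ = star (a i) * a j * (star (a i) * a i) + star (a i) * a j * (star (a j) * a j) := by
        rw [R1, R2, zero_add]
    _ = star (a i) * a j * (star (a i) * a i + star (a j) * a j) := by noncomm_ring

end Aux



/-- If `H` commutes with the total number operator
`N = n₁+n₂+n₃+n₄`, then conjugation by `e^{-iθ(ñ₁+ñ₂)}` equals conjugation by
`U_x(θ/2)`, where `U_x(φ) = exp(iφ(a₁†a₃+a₃†a₁)) exp(iφ(a₂†a₄+a₄†a₂))` and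
`ñ₁+ñ₂ = (N + a₁†a₃+a₃†a₁ + a₂†a₄+a₄†a₂)/2`. Modes 1,2,3,4 of the paper are
indexed by `0,1,2,3 : Fin 4`. -/
theorem conjugation_rotated_numbers_eq_Ux
    {A : Type*} [NormedRing A] [StarRing A] [NormedAlgebra ℂ A] [CompleteSpace A]
    (a : Fin 4 → A)
    (hcar1 : ∀ i j, a i * star (a j) + star (a j) * a i = if i = j then 1 else 0)
    (hcar2 : ∀ i j, a i * a j + a j * a i = 0)
    (H : A)
    (hH : H * (star (a 0) * a 0 + star (a 1) * a 1 + star (a 2) * a 2 +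
            star (a 3) * a 3) =
          (star (a 0) * a 0 + star (a 1) * a 1 + star (a 2) * a 2 +
            star (a 3) * a 3) * H)
    (θ : ℝ) :
    let N : A := star (a 0) * a 0 + star (a 1) * a 1 + star (a 2) * a 2 +
      star (a 3) * a 3
    let S₁₃ : A := star (a 0) * a 2 + star (a 2) * a 0
    let S₂₄ : A := star (a 1) * a 3 + star (a 3) * a 1
    let M : A := (2 : ℂ)⁻¹ • (N + S₁₃ + S₂₄)
    NormedSpace.exp (((θ : ℂ) * Complex.I) • M) * H *
        NormedSpace.exp ((-((θ : ℂ) * Complex.I)) • M) =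
      NormedSpace.exp ((((θ / 2 : ℝ) : ℂ) * Complex.I) • S₁₃) *
        NormedSpace.exp ((((θ / 2 : ℝ) : ℂ) * Complex.I) • S₂₄) * H *
        (NormedSpace.exp ((-(((θ / 2 : ℝ) : ℂ) * Complex.I)) • S₂₄) *
          NormedSpace.exp ((-(((θ / 2 : ℝ) : ℂ) * Complex.I)) • S₁₃)) := by
  intro N S₁₃ S₂₄ M
  have hadd : ∀ x y : A, Commute x y → exp (x + y) = exp x * exp y := fun x y hxy =>
    exp_add_of_commute_of_mem_ball (𝕂 := ℂ) hxy
      ((expSeries_radius_eq_top ℂ A).symm ▸ edist_lt_top _ _)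
      ((expSeries_radius_eq_top ℂ A).symm ▸ edist_lt_top _ _)
  set c : ℂ := ((θ / 2 : ℝ) : ℂ) * Complex.I with hcdef
  -- basic commutations
  have hc1324 : Commute S₁₃ S₂₄ := by
    have h1 := aux_comm_disjoint a hcar1 hcar2 0 2 1 3 (by decide) (by decide) (by decide) (by decide)
    have h2 := aux_comm_disjoint a hcar1 hcar2 0 2 3 1 (by decide) (by decide) (by decide) (by decide)
    have h3 := aux_comm_disjoint a hcar1 hcar2 2 0 1 3 (by decide) (by decide) (by decide) (by decide)
    have h4 := aux_comm_disjoint a hcar1 hcar2 2 0 3 1 (by decide) (by decide) (by decide) (by decide)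
    exact (h1.add_right h2).add_left (h3.add_right h4)
  have hNS : ∀ i j k l : Fin 4, ({i, j} : Finset (Fin 4)) = {k, l} →
      i ≠ j → True := fun _ _ _ _ _ _ => trivial
  have hN13 : Commute N S₁₃ := by
    have h02a := aux_ncomm a hcar1 hcar2 0 2 (by decide)
    have h02b := aux_ncomm a hcar1 hcar2 2 0 (by decide)
    have hsum : Commute (star (a 0) * a 0 + star (a 2) * a 2) S₁₃ := by
      have h02b' : Commute (star (a 0) * a 0 + star (a 2) * a 2) (star (a 2) * a 0) := by
        rw [add_comm]; exact h02b
      exact h02a.add_right h02b'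
    have h1a := aux_comm_disjoint a hcar1 hcar2 1 1 0 2 (by decide) (by decide) (by decide) (by decide)
    have h1b := aux_comm_disjoint a hcar1 hcar2 1 1 2 0 (by decide) (by decide) (by decide) (by decide)
    have h3a := aux_comm_disjoint a hcar1 hcar2 3 3 0 2 (by decide) (by decide) (by decide) (by decide)
    have h3b := aux_comm_disjoint a hcar1 hcar2 3 3 2 0 (by decide) (by decide) (by decide) (by decide)
    have h1 : Commute (star (a 1) * a 1) S₁₃ := h1a.add_right h1b
    have h3 : Commute (star (a 3) * a 3) S₁₃ := h3a.add_right h3b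
    have hre : N = (star (a 0) * a 0 + star (a 2) * a 2) + star (a 1) * a 1
        + star (a 3) * a 3 := by simp only [N]; abel
    rw [hre]
    exact (hsum.add_left h1).add_left h3
  have hN24 : Commute N S₂₄ := by
    have h13a := aux_ncomm a hcar1 hcar2 1 3 (by decide)
    have h13b := aux_ncomm a hcar1 hcar2 3 1 (by decide)
    have hsum : Commute (star (a 1) * a 1 + star (a 3) * a 3) S₂₄ := by
      have h13b' : Commute (star (a 1) * a 1 + star (a 3) * a 3) (star (a 3) * a 1) := by
        rw [add_comm]; exact h13b
      exact h13a.add_right h13b'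
    have h0a := aux_comm_disjoint a hcar1 hcar2 0 0 1 3 (by decide) (by decide) (by decide) (by decide)
    have h0b := aux_comm_disjoint a hcar1 hcar2 0 0 3 1 (by decide) (by decide) (by decide) (by decide)
    have h2a := aux_comm_disjoint a hcar1 hcar2 2 2 1 3 (by decide) (by decide) (by decide) (by decide)
    have h2b := aux_comm_disjoint a hcar1 hcar2 2 2 3 1 (by decide) (by decide) (by decide) (by decide)
    have h0 : Commute (star (a 0) * a 0) S₂₄ := h0a.add_right h0b
    have h2 : Commute (star (a 2) * a 2) S₂₄ := h2a.add_right h2b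
    have hre : N = (star (a 1) * a 1 + star (a 3) * a 3) + star (a 0) * a 0
        + star (a 2) * a 2 := by simp only [N]; abel
    rw [hre]
    exact (hsum.add_left h0).add_left h2
  have hHN : Commute H N := hH
  -- exp expansions
  have hsm1 : ((θ : ℂ) * Complex.I) • M = c • N + c • S₁₃ + c • S₂₄ := by
    show ((θ : ℂ) * Complex.I) • ((2 : ℂ)⁻¹ • (N + S₁₃ + S₂₄)) = _
    have hc : c = ((θ : ℂ) * Complex.I) * (2 : ℂ)⁻¹ := by
      rw [hcdef]; push_cast; ring
    rw [smul_smul, ← hc, smul_add, smul_add]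
  have hsm2 : (-((θ : ℂ) * Complex.I)) • M = (-c) • S₂₄ + (-c) • S₁₃ + (-c) • N := by
    show (-((θ : ℂ) * Complex.I)) • ((2 : ℂ)⁻¹ • (N + S₁₃ + S₂₄)) = _
    have hc : c = ((θ : ℂ) * Complex.I) * (2 : ℂ)⁻¹ := by
      rw [hcdef]; push_cast; ring
    rw [smul_smul]
    rw [show -((θ : ℂ) * Complex.I) * (2:ℂ)⁻¹ = -c by rw [hc]; ring]
    rw [smul_add, smul_add]; abel
  rw [hsm1, hsm2]
  rw [hadd _ _ (Commute.add_left ((hN24.smul_left c).smul_right c)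
        ((hc1324.smul_left c).smul_right c)),
      hadd _ _ ((hN13.smul_left c).smul_right c),
      hadd _ _ (Commute.add_left ((hN24.symm.smul_left (-c)).smul_right (-c))
        ((hN13.symm.smul_left (-c)).smul_right (-c))),
      hadd _ _ ((hc1324.symm.smul_left (-c)).smul_right (-c))]
  -- abbreviations
  set EN := exp (c • N)
  set E13 := exp (c • S₁₃)
  set E24 := exp (c • S₂₄)
  set EN' := exp ((-c) • N)
  set E13' := exp ((-c) • S₁₃)
  set E24' := exp ((-c) • S₂₄)
  have cN13 : Commute EN E13 := ((hN13.smul_left c).smul_right c).exp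
  have cN24 : Commute EN E24 := ((hN24.smul_left c).smul_right c).exp
  have cN13' : Commute EN E13' := ((hN13.smul_left c).smul_right (-c)).exp
  have cN24' : Commute EN E24' := ((hN24.smul_left c).smul_right (-c)).exp
  have cNH : Commute EN H := ((hHN.symm.smul_left c).exp_left).symm.symm
  have hNN' : EN * EN' = 1 := by
    rw [← hadd _ _ (((Commute.refl N).smul_left c).smul_right (-c))]
    rw [show c • N + (-c) • N = 0 by rw [← add_smul]; simp]
    exact exp_zero
  have hXN : Commute EN (E13 * E24 * H * (E24' * E13')) :=
    ((cN13.mul_right cN24).mul_right cNH).mul_right (cN24'.mul_right cN13')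
  calc EN * E13 * E24 * H * (E24' * E13' * EN')
      = EN * (E13 * E24 * H * (E24' * E13')) * EN' := by simp only [mul_assoc]
    _ = (E13 * E24 * H * (E24' * E13')) * EN * EN' := by rw [hXN.eq]
    _ = (E13 * E24 * H * (E24' * E13')) * (EN * EN') := by rw [mul_assoc]
    _ = E13 * E24 * H * (E24' * E13') := by rw [hNN', mul_one]
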